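/- For two EL atoms C and D, C is subsumed by D if and only if either C = D is a concept name, or C = ∃r.C' and D = ∃r.D' for the same role r with C' subsumed by D'. -/

import Mathlib

inductive EL (N R : Type) : Type where
  | name : N → EL N R
  | top  : EL N R
  | conj : EL N R → EL N R → EL N R
  | ex   : R → EL N R → EL N R

structure Interp (N R : Type) where
  dom : Type
  nonempty : Nonempty dom
  cname : N → Set dom
  role : R → Set (dom × dom)

def Interp.sem {N R : Type} (I : Interp N R) : EL N R → Set I.dom
  | .name A => I.cname A
  | .top => Set.univ
  | .conj C D => I.sem C ∩ I.sem D
  | .ex r C => {x | ∃ y, (x, y) ∈ I.role r ∧ y ∈ I.sem C}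

/-- Semantic subsumption: `C ⊑ D` iff `C^I ⊆ D^I` for every interpretation `I`. -/
def Subsume {N R : Type} (C D : EL N R) : Prop :=
  ∀ I : Interp N R, I.sem C ⊆ I.sem D

/-- An atom is a concept name or an existential restriction. -/
def IsAtomEL {N R : Type} : EL N R → Prop
  | .name _ => True
  | .ex _ _ => True
  | _ => False

/-- Top-level atoms of a concept term. -/
def tla {N R : Type} : EL N R → List (EL N R)
  | .conj C D => tla C ++ tla D
  | .top => []
  | .name A => [EL.name A]
  | .ex r C => [EL.ex r C]

/-- Conjunction of a nonempty list of terms `C :: Cs` (no extra ⊤ conjunct). -/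
def conjs {N R : Type} : EL N R → List (EL N R) → EL N R
  | C, [] => C
  | C, D :: Ds => .conj C (conjs D Ds)

/-- Conjunction of a list of terms; the empty conjunction is ⊤. -/
def conjList {N R : Type} : List (EL N R) → EL N R
  | [] => .top
  | C :: Cs => conjs C Cs

/-- Symbol count: each concept name (and ⊤) is one symbol, each `∃r.` is one symbol. -/
def sizeEL {N R : Type} : EL N R → ℕ
  | .name _ => 1
  | .top => 1
  | .conj C D => sizeEL C + sizeEL D + 1
  | .ex _ C => sizeEL C + 1

/-- Groundness: no occurrence of a variable (names are `V ⊕ K`, variables on the left). -/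
def isGround {V K R : Type} : EL (V ⊕ K) R → Prop
  | .name (Sum.inl _) => False
  | .name (Sum.inr _) => True
  | .top => True
  | .conj C D => isGround C ∧ isGround D
  | .ex _ C => isGround C

/-- Application of a substitution `σ : V → EL (V ⊕ K) R` to a concept term. -/
def applySub {V K R : Type} (σ : V → EL (V ⊕ K) R) : EL (V ⊕ K) R → EL (V ⊕ K) R
  | .name (Sum.inl X) => σ X
  | .name (Sum.inr A) => .name (Sum.inr A)
  | .top => .top
  | .conj C D => .conj (applySub σ C) (applySub σ D)
  | .ex r C => .ex r (applySub σ C)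

/-- The variable `Y` occurs in the concept term. -/
def occursVar {V K R : Type} (Y : V) : EL (V ⊕ K) R → Prop
  | .name (Sum.inl X) => X = Y
  | .name (Sum.inr _) => False
  | .top => False
  | .conj C D => occursVar Y C ∨ occursVar Y D
  | .ex _ C => occursVar Y C

theorem subsume_refl {N R : Type} (C : EL N R) : Subsume C C :=
  fun _ _ h => h

/-- Canonical tree model built from syntax. -/
def canon (N R : Type) : Interp N R where
  dom := EL N R
  nonempty := ⟨.top⟩
  cname A := {E | EL.name A ∈ tla E}
  role r := {p | EL.ex r p.2 ∈ tla p.1}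

theorem canon_self {N R : Type} :
    ∀ (C E : EL N R), (∀ a ∈ tla C, a ∈ tla E) → E ∈ (canon N R).sem C := by
  intro C
  induction C with
  | name A => intro E h; exact h _ (by simp [tla])
  | top => intro E _; trivial
  | conj C D ihC ihD =>
      intro E h
      exact ⟨ihC E (fun a ha => h a (by simp [tla, ha])),
             ihD E (fun a ha => h a (by simp [tla, ha]))⟩
  | ex r C ih =>
      intro E h
      exact ⟨C, h _ (by simp [tla]), ih C (fun a ha => ha)⟩

/-- Extend an interpretation with a fresh root with one `r`-edge to `x`. -/
def extI {N R : Type} (I : Interp N R) (r : R) (x : I.dom) : Interp N R where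
  dom := Option I.dom
  nonempty := ⟨none⟩
  cname A := {p | ∃ a, p = some a ∧ a ∈ I.cname A}
  role s := {p | (∃ a b, p = (some a, some b) ∧ (a, b) ∈ I.role s) ∨
      (s = r ∧ p = (none, some x))}

theorem extI_sem {N R : Type} (I : Interp N R) (r : R) (x : I.dom) :
    ∀ (E : EL N R) (a : I.dom), some a ∈ (extI I r x).sem E ↔ a ∈ I.sem E := by
  intro E
  induction E with
  | name A => intro a; simp [extI, Interp.sem]; exact Iff.intro (fun h => by obtain ⟨b, hb, hb'⟩ := h; cases hb; exact hb') (fun h => ⟨a, rfl, h⟩)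
  | top => intro a; simp [Interp.sem]; exact Set.mem_univ _
  | conj C D ihC ihD => intro a; simp only [Interp.sem, Set.mem_inter_iff, ihC, ihD]; exact (ihC a).and (ihD a)
  | ex s C ih =>
      intro a
      constructor
      · rintro ⟨y, hr, hy⟩
        rcases hr with ⟨a', b, heq, hab⟩ | ⟨rfl, heq⟩
        · cases heq
          exact ⟨b, hab, (ih b).1 hy⟩
        · cases heq
      · rintro ⟨y, hxy, hy⟩
        exact ⟨some y, Or.inl ⟨a, y, rfl, hxy⟩, (ih y).2 hy⟩

theorem subsume_ex {N R : Type} {r : R} {C' D' : EL N R}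
    (h : Subsume (EL.ex r C') (EL.ex r D')) : Subsume C' D' := by
  intro I x hx
  have hroot : (none : (extI I r x).dom) ∈ (extI I r x).sem (EL.ex r C') :=
    ⟨some x, Or.inr ⟨rfl, rfl⟩, (extI_sem I r x C' x).2 hx⟩
  obtain ⟨y, hr, hy⟩ := h (extI I r x) hroot
  rcases hr with ⟨a, b, heq, _⟩ | ⟨_, heq⟩
  · cases heq
  · cases heq
    exact (extI_sem I r x D' x).1 hy

theorem stmt0 {N R : Type} (C D : EL N R) (hC : IsAtomEL C) (hD : IsAtomEL D) :
    Subsume C D ↔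
      ((∃ A : N, C = EL.name A ∧ D = EL.name A) ∨
        ∃ (r : R) (C' D' : EL N R), C = EL.ex r C' ∧ D = EL.ex r D' ∧ Subsume C' D') := by
  constructor
  · intro h
    have hself : C ∈ (canon N R).sem C := canon_self C C (fun a ha => ha)
    have hmem : C ∈ (canon N R).sem D := h (canon N R) hself
    cases D with
    | name A =>
        have : EL.name A ∈ tla C := hmem
        cases C with
        | name B =>
            simp [tla] at this
            exact Or.inl ⟨A, by rw [this], rfl⟩
        | top => exact absurd hC (by simp [IsAtomEL])
        | conj _ _ => exact absurd hC (by simp [IsAtomEL])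
        | ex s C' => simp [tla] at this
    | top => exact absurd hD (by simp [IsAtomEL])
    | conj _ _ => exact absurd hD (by simp [IsAtomEL])
    | ex s D' =>
        obtain ⟨y, hr, _⟩ := hmem
        have hr' : EL.ex s y ∈ tla C := hr
        cases C with
        | name B => simp [tla] at hr'
        | top => exact absurd hC (by simp [IsAtomEL])
        | conj _ _ => exact absurd hC (by simp [IsAtomEL])
        | ex r C' =>
            simp [tla] at hr'
            obtain ⟨rfl, rfl⟩ := hr'
            exact Or.inr ⟨_, _, D', rfl, rfl, subsume_ex h⟩
  · rintro (⟨A, rfl, rfl⟩ | ⟨r, C', D', rfl, rfl, h⟩)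
    · exact subsume_refl _
    · intro I x hx
      obtain ⟨y, hxy, hy⟩ := hx
      exact ⟨y, hxy, h I hy⟩
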